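/- arXiv:2406.04499 — 3 statements merged into one kernel-verified Lean document; each statement's English description precedes it below -/
import Mathlib

section
/- Let H be a real Hilbert space, a : H × H → ℝ a continuous, symmetric, coercive bilinear form, j : H → ℝ convex, nonnegative, and Lipschitz continuous, L a continuous linear functional, and K ⊆ H a nonempty closed convex set. Then there exists u ∈ K such that a(u, v - u) + j(v) - j(u) ≥ L(v - u) for all v ∈ K. -/
open Filter Topology

set_option maxHeartbeats 1600000 in
/-- Existence of a solution of an elliptic variational inequality of the second kind. -/
theorem stmt1
    {H : Type*} [NormedAddCommGroup H] [InnerProductSpace ℝ H] [CompleteSpace H]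
    (a : H →L[ℝ] H →L[ℝ] ℝ)
    (hsymm : ∀ u v : H, a u v = a v u)
    (α : ℝ) (hα : 0 < α)
    (hcoer : ∀ v : H, α * ‖v‖ ^ 2 ≤ a v v)
    (j : H → ℝ) (hjconv : ConvexOn ℝ Set.univ j)
    (hjnonneg : ∀ v, 0 ≤ j v)
    (cj : NNReal) (hjlip : LipschitzWith cj j)
    (L : H →L[ℝ] ℝ)
    (K : Set H) (hKne : K.Nonempty) (hKcl : IsClosed K) (hKcv : Convex ℝ K) :
    ∃ u ∈ K, ∀ v ∈ K, L (v - u) ≤ a u (v - u) + j v - j u := by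
  classical
  set E : H → ℝ := fun v => a v v / 2 + j v - L v with hE
  clear_value E
  have hEcont : Continuous E := by
    have h1 : Continuous fun v : H => a v v :=
      a.isBoundedBilinearMap.continuous.comp (continuous_id.prodMk continuous_id)
    rw [hE]
    exact ((h1.div_const 2).add hjlip.continuous).sub L.continuous
  have hbdd : ∀ v : H, -(‖L‖ ^ 2) / (2 * α) ≤ E v := by
    intro v
    have h1 := hcoer v
    have h2 : L v ≤ ‖L‖ * ‖v‖ :=
      (le_abs_self (L v)).trans (by rw [← Real.norm_eq_abs]; exact L.le_opNorm v)
    have h3 := hjnonneg v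
    have h4 : (0 : ℝ) ≤ ‖v‖ := norm_nonneg v
    have h5 : (0 : ℝ) ≤ ‖L‖ := norm_nonneg L
    simp only [hE]
    rw [div_le_iff₀ (by positivity)]
    nlinarith [sq_nonneg (α * ‖v‖ - ‖L‖)]
  have hne : (E '' K).Nonempty := hKne.image E
  have hbdd' : BddBelow (E '' K) := ⟨_, fun x ⟨v, hv, hvx⟩ => hvx ▸ hbdd v⟩
  set m := sInf (E '' K) with hm
  clear_value m
  have hmle : ∀ v ∈ K, m ≤ E v := by
    intro v hv
    rw [hm]
    exact csInf_le hbdd' ⟨v, hv, rfl⟩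
  -- strong convexity estimate
  have key : ∀ x ∈ K, ∀ y ∈ K, m + α / 8 * ‖x - y‖ ^ 2 ≤ E x / 2 + E y / 2 := by
    intro x hx y hy
    set z := (1 / 2 : ℝ) • x + (1 / 2 : ℝ) • y with hz
    have hzK : z ∈ K := hKcv hx hy (by norm_num) (by norm_num) (by norm_num)
    clear_value z
    have h1 : m ≤ E z := hmle z hzK
    have hxy : α * ‖x - y‖ ^ 2 ≤ a x x - 2 * a x y + a y y := by
      have h := hcoer (x - y)
      have heq : a (x - y) (x - y) = a x x - a x y - a y x + a y y := by
        simp [map_sub, ContinuousLinearMap.sub_apply]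
        ring
      rw [heq, hsymm y x] at h
      linarith
    have haz : a z z = (a x x + 2 * a x y + a y y) / 4 := by
      simp only [hz, map_add, map_smul, ContinuousLinearMap.add_apply,
        ContinuousLinearMap.smul_apply, smul_eq_mul]
      rw [hsymm y x]
      ring
    have hjz : j z ≤ j x / 2 + j y / 2 := by
      have h := hjconv.2 (Set.mem_univ x) (Set.mem_univ y)
        (by norm_num : (0:ℝ) ≤ 1/2) (by norm_num : (0:ℝ) ≤ 1/2) (by norm_num)
      rw [← hz] at h
      simp only [smul_eq_mul] at h
      linarith
    have hLz : L z = L x / 2 + L y / 2 := by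
      simp only [hz, map_add, map_smul, smul_eq_mul]
      ring
    have hEz : E z ≤ E x / 2 + E y / 2 - α / 8 * ‖x - y‖ ^ 2 := by
      simp only [hE]
      rw [haz, hLz]
      nlinarith
    nlinarith [h1, hEz]
  -- minimizing sequence
  have hseq : ∀ n : ℕ, ∃ x, x ∈ K ∧ E x < m + 1 / ((n : ℝ) + 1) := by
    intro n
    have hpos : (0 : ℝ) < 1 / ((n : ℝ) + 1) := by positivity
    have hmlt : m < m + 1 / ((n : ℝ) + 1) := by linarith
    rw [hm] at hmlt
    obtain ⟨y, ⟨x, hxK, rfl⟩, hlt⟩ := exists_lt_of_csInf_lt hne hmlt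
    rw [← hm] at hlt
    exact ⟨x, hxK, hlt⟩
  choose u huK huE using hseq
  have hcauchy : CauchySeq u := by
    rw [Metric.cauchySeq_iff]
    intro ε hε
    obtain ⟨N, hN⟩ := exists_nat_gt (8 / (α * ε ^ 2))
    refine ⟨N, fun p hp q hq => ?_⟩
    have h1 := key _ (huK p) _ (huK q)
    have h2 := huE p
    have h3 := huE q
    have hp1 : 1 / ((p : ℝ) + 1) ≤ 1 / ((N : ℝ) + 1) := by
      apply one_div_le_one_div_of_le (by positivity)
      have : (N : ℝ) ≤ (p : ℝ) := by exact_mod_cast hp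
      linarith
    have hq1 : 1 / ((q : ℝ) + 1) ≤ 1 / ((N : ℝ) + 1) := by
      apply one_div_le_one_div_of_le (by positivity)
      have : (N : ℝ) ≤ (q : ℝ) := by exact_mod_cast hq
      linarith
    have hNe : 1 / ((N : ℝ) + 1) < α * ε ^ 2 / 8 := by
      rw [div_lt_div_iff₀ (by positivity) (by norm_num)]
      have h8 : 8 / (α * ε ^ 2) < (N : ℝ) + 1 := by linarith
      have := (div_lt_iff₀ (by positivity : (0:ℝ) < α * ε ^ 2)).mp h8
      nlinarith
    have hd2 : ‖u p - u q‖ ^ 2 < ε ^ 2 := by nlinarith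
    rw [dist_eq_norm]
    exact lt_of_pow_lt_pow_left₀ 2 hε.le hd2
  obtain ⟨w, hw⟩ := cauchySeq_tendsto_of_complete hcauchy
  have hwK : w ∈ K := hKcl.mem_of_tendsto hw (Filter.Eventually.of_forall huK)
  have hEw : ∀ v ∈ K, E w ≤ E v := by
    intro v hv
    have h1 : Tendsto (fun n => E (u n)) atTop (𝓝 (E w)) := (hEcont.tendsto w).comp hw
    have h2 : Tendsto (fun n : ℕ => m + 1 / ((n : ℝ) + 1)) atTop (𝓝 m) := by
      have := tendsto_one_div_add_atTop_nhds_zero_nat (𝕜 := ℝ)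
      simpa using tendsto_const_nhds.add this
    have h3 : E w ≤ m := le_of_tendsto_of_tendsto' h1 h2 fun n => (huE n).le
    exact h3.trans (hmle v hv)
  -- derive the variational inequality
  refine ⟨w, hwK, fun v hv => ?_⟩
  set d := v - w with hd
  clear_value d
  have hdd : (0 : ℝ) ≤ a d d := le_trans (by positivity) (hcoer d)
  have hkey : ∀ t : ℝ, 0 < t → t ≤ 1 →
      L d ≤ a w d + j v - j w + t * (a d d / 2) := by
    intro t ht ht1
    set z := w + t • d with hz
    have hcomb : (1 - t) • w + t • v = z := by
      rw [hz, hd]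
      rw [smul_sub, sub_smul, one_smul]
      abel
    have hzK : z ∈ K := by
      have h := hKcv hwK hv (by linarith : (0:ℝ) ≤ 1 - t) ht.le (by ring)
      rwa [hcomb] at h
    clear_value z
    have h1 := hEw z hzK
    have haz : a z z = a w w + 2 * t * a w d + t ^ 2 * a d d := by
      simp only [hz, map_add, map_smul, ContinuousLinearMap.add_apply,
        ContinuousLinearMap.smul_apply, smul_eq_mul]
      rw [hsymm d w]
      ring
    have hjz : j z ≤ (1 - t) * j w + t * j v := by
      have h := hjconv.2 (Set.mem_univ w) (Set.mem_univ v)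
        (by linarith : (0:ℝ) ≤ 1 - t) ht.le (by ring)
      rw [hcomb] at h
      simpa [smul_eq_mul] using h
    have hLz : L z = L w + t * L d := by
      simp only [hz, map_add, map_smul, smul_eq_mul]
    simp only [hE] at h1
    rw [haz, hLz] at h1
    have h2 : t * L d ≤ t * (a w d + j v - j w + t * (a d d / 2)) := by nlinarith
    exact (mul_le_mul_iff_right₀ ht).mp h2
  refine le_of_forall_pos_le_add fun ε hε => ?_
  have hc : (0 : ℝ) < a d d / 2 + 1 := by linarith
  obtain ⟨t, ht, ht1, ht2⟩ : ∃ t : ℝ, 0 < t ∧ t ≤ 1 ∧ t ≤ ε / (a d d / 2 + 1) :=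
    ⟨min 1 (ε / (a d d / 2 + 1)), lt_min one_pos (div_pos hε hc),
      min_le_left _ _, min_le_right _ _⟩
  have h := hkey t ht ht1
  have h3 : t * (a d d / 2) ≤ ε := by
    have h4 : t * (a d d / 2 + 1) ≤ ε := (le_div_iff₀ hc).mp ht2
    have h5 : t * (a d d / 2) + t = t * (a d d / 2 + 1) := by ring
    linarith
  linarith
end

section
/- Let V be a real Hilbert space with symmetric bounded coercive bilinear form a, let λ, λ̃ ∈ V, and let K(λ) = {v ∈ V : B(v) ≤ -ℓ(λ)} where the constraint is such that K(λ) = E λ + K(0) for a bounded linear map E : V → V with a(Ev, w) well-defined, K(0) a closed convex cone. Let j_λ(v) = J(v - Eλ) for a convex Lipschitz J, and let u(λ) ∈ K(λ) solve a(u, v - u) + j_λ(v) - j_λ(u) ≥ L(v - u) for all v ∈ K(λ). Then a(u(λ) - u(λ̃), u(λ) - u(λ̃)) ≤ a(u(λ) - u(λ̃), E(λ - λ̃)), and consequently ‖u(λ) - u(λ̃)‖_a ≤ ‖E(λ - λ̃)‖_a. -/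
/-- Stability of the parametrized contact subproblem with respect to the interface
data: `a(u(λ) - u(λ̃), u(λ) - u(λ̃)) ≤ a(u(λ) - u(λ̃), E(λ - λ̃))`, hence the energy
norm of the difference of solutions is bounded by that of `E(λ - λ̃)`. -/
theorem stmt10
    {V : Type*} [NormedAddCommGroup V] [InnerProductSpace ℝ V] [CompleteSpace V]
    (a : V →L[ℝ] V →L[ℝ] ℝ)
    (hsymm : ∀ u v : V, a u v = a v u)
    (α : ℝ) (hα : 0 < α)
    (hcoer : ∀ v : V, α * ‖v‖ ^ 2 ≤ a v v)
    (E : V →L[ℝ] V)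
    (K0 : Set V) (hK0cl : IsClosed K0) (hK0cv : Convex ℝ K0)
    (hK0cone : ∀ c : ℝ, 0 ≤ c → ∀ x ∈ K0, c • x ∈ K0)
    (J : V → ℝ) (hJconv : ConvexOn ℝ Set.univ J)
    (cJ : NNReal) (hJlip : LipschitzWith cJ J)
    (L : V →L[ℝ] ℝ)
    (lam lamt : V) (u ut : V)
    (hu : u - E lam ∈ K0) (hut : ut - E lamt ∈ K0)
    (hVI : ∀ v : V, v - E lam ∈ K0 →
      L (v - u) ≤ a u (v - u) + J (v - E lam) - J (u - E lam))
    (hVIt : ∀ v : V, v - E lamt ∈ K0 →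
      L (v - ut) ≤ a ut (v - ut) + J (v - E lamt) - J (ut - E lamt)) :
    a (u - ut) (u - ut) ≤ a (u - ut) (E (lam - lamt)) ∧
    Real.sqrt (a (u - ut) (u - ut)) ≤
      Real.sqrt (a (E (lam - lamt)) (E (lam - lamt))) := by
  set d := u - ut with hd
  set e := E (lam - lamt) with he
  have hmem1 : (ut + e) - E lam ∈ K0 := by
    have : (ut + e) - E lam = ut - E lamt := by
      simp only [he, map_sub]; abel
    rw [this]; exact hut
  have hmem2 : (u - e) - E lamt ∈ K0 := by
    have : (u - e) - E lamt = u - E lam := by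
      simp only [he, map_sub]; abel
    rw [this]; exact hu
  have h1 := hVI (ut + e) hmem1
  have h2 := hVIt (u - e) hmem2
  have e1 : (ut + e) - E lam = ut - E lamt := by simp only [he, map_sub]; abel
  have e2 : (u - e) - E lamt = u - E lam := by simp only [he, map_sub]; abel
  rw [e1] at h1
  rw [e2] at h2
  have e3 : (ut + e) - u = -(d - e) := by simp only [hd]; abel
  have e4 : (u - e) - ut = d - e := by simp only [hd]; abel
  rw [e3] at h1
  rw [e4] at h2
  -- add the inequalities
  have hsum : (0:ℝ) ≤ a u (-(d - e)) + a ut (d - e) := by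
    have := add_le_add h1 h2
    have hL : L (-(d - e)) + L (d - e) = 0 := by
      rw [← map_add]; simp
    linarith
  have key : a d d ≤ a d e := by
    have hexp : a u (-(d - e)) + a ut (d - e) = -(a d d) + a d e := by
      simp only [hd, map_neg, map_sub, ContinuousLinearMap.sub_apply,
        ContinuousLinearMap.neg_apply]
      ring
    rw [hexp] at hsum
    linarith
  refine ⟨key, ?_⟩
  have hdd : (0:ℝ) ≤ a d d := le_trans (by positivity) (hcoer d)
  have hee : (0:ℝ) ≤ a e e := le_trans (by positivity) (hcoer e)
  -- Cauchy–Schwarz for a via the discriminant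
  have hquad : ∀ t : ℝ, 0 ≤ a e e * (t * t) + (-2 * a d e) * t + a d d := by
    intro t
    have h0 : (0:ℝ) ≤ a (d - t • e) (d - t • e) :=
      le_trans (by positivity) (hcoer _)
    have hexp : a (d - t • e) (d - t • e)
        = a e e * (t * t) + (-2 * a d e) * t + a d d := by
      simp only [map_sub, map_smul, ContinuousLinearMap.sub_apply,
        ContinuousLinearMap.smul_apply, smul_eq_mul]
      linear_combination (-t : ℝ) * hsymm e d
    linarith [hexp ▸ h0]
  have hdisc := discrim_le_zero hquad
  rw [discrim] at hdisc
  have hcs : (a d e) ^ 2 ≤ a d d * a e e := by nlinarith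
  rcases eq_or_lt_of_le hdd with h0 | hpos
  · rw [← h0, Real.sqrt_zero]
    exact Real.sqrt_nonneg _
  · have hsq : a d d * a d d ≤ a d d * a e e := by nlinarith
    have : a d d ≤ a e e := le_of_mul_le_mul_left hsq hpos
    exact Real.sqrt_le_sqrt this
end

section
/- Let H be a real Hilbert space, a a symmetric bounded coercive bilinear form, K₀ ⊆ H a closed convex cone, E : Λ → H a bounded linear map from a Hilbert space Λ, j a convex Lipschitz functional, L continuous linear. For λ ∈ Λ let u(λ) be the unique solution of the variational inequality a(u, v - u) + j(v - Eλ) - j(u - Eλ) ≥ L(v - u) over K(λ) = Eλ + K₀. Then the solution map λ ↦ u(λ) is Lipschitz: ‖u(λ) - u(μ)‖_a ≤ ‖E(λ - μ)‖_a ≤ ‖E‖·‖λ - μ‖_Λ. -/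
/-- Lipschitz dependence of the solution of the parametrized Tresca-friction
subproblem on the interface datum: `‖u(λ) - u(μ)‖_a ≤ ‖E(λ - μ)‖_a ≤ ‖E‖ ‖λ - μ‖`,
where `CE` is the norm of `E` as an operator into `(H, ‖·‖_a)`. -/
theorem stmt17
    {H Λ : Type*}
    [NormedAddCommGroup H] [InnerProductSpace ℝ H] [CompleteSpace H]
    [NormedAddCommGroup Λ] [InnerProductSpace ℝ Λ] [CompleteSpace Λ]
    (a : H →L[ℝ] H →L[ℝ] ℝ)
    (hsymm : ∀ u v : H, a u v = a v u)
    (α : ℝ) (hα : 0 < α)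
    (hcoer : ∀ v : H, α * ‖v‖ ^ 2 ≤ a v v)
    (K0 : Set H) (hK0cl : IsClosed K0) (hK0cv : Convex ℝ K0)
    (hK0cone : ∀ c : ℝ, 0 ≤ c → ∀ x ∈ K0, c • x ∈ K0)
    (E : Λ →L[ℝ] H)
    (CE : ℝ) (hCE : ∀ x : Λ, Real.sqrt (a (E x) (E x)) ≤ CE * ‖x‖)
    (j : H → ℝ) (hjconv : ConvexOn ℝ Set.univ j)
    (cj : NNReal) (hjlip : LipschitzWith cj j)
    (L : H →L[ℝ] ℝ)
    (u : Λ → H)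
    (hmem : ∀ lam : Λ, u lam - E lam ∈ K0)
    (hVI : ∀ lam : Λ, ∀ v : H, v - E lam ∈ K0 →
      L (v - u lam) ≤ a (u lam) (v - u lam) + j (v - E lam) - j (u lam - E lam))
    (huniq : ∀ (lam : Λ) (w : H), w - E lam ∈ K0 →
      (∀ v : H, v - E lam ∈ K0 →
        L (v - w) ≤ a w (v - w) + j (v - E lam) - j (w - E lam)) → w = u lam) :
    ∀ lam mu : Λ,
      Real.sqrt (a (u lam - u mu) (u lam - u mu)) ≤
        Real.sqrt (a (E (lam - mu)) (E (lam - mu))) ∧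
      Real.sqrt (a (E (lam - mu)) (E (lam - mu))) ≤ CE * ‖lam - mu‖ := by

  intro lam mu
  refine ⟨?_, hCE (lam - mu)⟩
  set e : H := E (lam - mu) with he
  set w : H := u lam - u mu with hw
  have anonneg : ∀ v : H, 0 ≤ a v v := fun v =>
    le_trans (by positivity) (hcoer v)
  -- test functions
  have hv1 : (u mu + e) - E lam = u mu - E mu := by
    simp [he, map_sub]; abel
  have hv2 : (u lam - e) - E mu = u lam - E lam := by
    simp [he, map_sub]; abel
  have h1 := hVI lam (u mu + e) (hv1 ▸ hmem mu)
  have h2 := hVI mu (u lam - e) (hv2 ▸ hmem lam)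
  rw [hv1] at h1
  rw [hv2] at h2
  have hd1 : (u mu + e) - u lam = -(w - e) := by rw [hw]; abel
  have hd2 : (u lam - e) - u mu = w - e := by rw [hw]; abel
  rw [hd1] at h1
  rw [hd2] at h2
  have hsub : ∀ v : H, a w v = a (u lam) v - a (u mu) v := by
    intro v; rw [hw, map_sub]; simp
  have hkey : a w w ≤ a w e := by
    have hsum := add_le_add h1 h2
    simp only [map_neg, map_sub, ContinuousLinearMap.neg_apply,
      ContinuousLinearMap.sub_apply] at hsum
    have hww := hsub w
    have hwe := hsub e
    linarith
  -- Cauchy–Schwarz for a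
  have hCS : a w e ≤ Real.sqrt (a w w) * Real.sqrt (a e e) := by
    rcases eq_or_lt_of_le (anonneg e) with hee | hee
    · have he0 : e = 0 := by
        have h := hcoer e
        have hsq0 : ‖e‖ ^ 2 ≤ 0 := by nlinarith [h, hα, hee]
        have h2 : ‖e‖ = 0 := by nlinarith [norm_nonneg e]
        simpa using norm_eq_zero.mp h2
      have : a w e = 0 := by rw [he0]; simp
      rw [this]
      positivity
    · have h0 := anonneg ((a e e) • w - (a w e) • e)
      have hexp : a ((a e e) • w - (a w e) • e) ((a e e) • w - (a w e) • e)
          = (a e e) ^ 2 * a w w - 2 * (a e e) * (a w e) ^ 2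
            + (a w e) ^ 2 * (a e e) := by
        simp [map_sub, map_smul, ContinuousLinearMap.sub_apply,
          ContinuousLinearMap.smul_apply, smul_eq_mul, hsymm e w]
        ring
      rw [hexp] at h0
      have hsq : (a w e) ^ 2 ≤ a w w * a e e := by nlinarith [h0, hee]
      calc a w e ≤ |a w e| := le_abs_self _
        _ = Real.sqrt ((a w e) ^ 2) := (Real.sqrt_sq_eq_abs _).symm
        _ ≤ Real.sqrt (a w w * a e e) := Real.sqrt_le_sqrt hsq
        _ = Real.sqrt (a w w) * Real.sqrt (a e e) := Real.sqrt_mul (anonneg w) _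
  have hs : Real.sqrt (a w w) ^ 2 = a w w := Real.sq_sqrt (anonneg w)
  have hfin : Real.sqrt (a w w) ^ 2 ≤ Real.sqrt (a w w) * Real.sqrt (a e e) := by
    rw [hs]; exact le_trans hkey hCS
  rcases eq_or_lt_of_le (Real.sqrt_nonneg (a w w)) with hz | hz
  · rw [← hz]; exact Real.sqrt_nonneg _
  · nlinarith [hfin, hz]
end
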